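/- Let a > 0 and let E(a) = (∫_a^∞ z e^{−z²/2} dz)/(∫_a^∞ e^{−z²/2} dz) be the mean of a standard normal truncated to (a, ∞). Then a(a²+3)/(a²+2) ≤ E(a) ≤ a + 1/a. -/

import Mathlib

set_option maxHeartbeats 800000


open Real MeasureTheory Set Filter

private lemma exp_half_eq (z : ℝ) : Real.exp (-z ^ 2 / 2) = Real.exp (-(1/2) * z ^ 2) := by
  ring_nf

private lemma E_integrable : Integrable (fun z : ℝ => Real.exp (-z ^ 2 / 2)) := by
  have h := integrable_exp_neg_mul_sq (show (0:ℝ) < 1/2 by norm_num)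
  exact h.congr (Filter.Eventually.of_forall fun z => (exp_half_eq z).symm)

private lemma zE_integrable : Integrable (fun z : ℝ => z * Real.exp (-z ^ 2 / 2)) := by
  have h := integrable_mul_exp_neg_mul_sq (show (0:ℝ) < 1/2 by norm_num)
  exact h.congr (Filter.Eventually.of_forall fun z => by simp only [← exp_half_eq])

private lemma E_tendsto : Tendsto (fun z : ℝ => Real.exp (-z ^ 2 / 2)) atTop (nhds 0) := by
  apply Real.tendsto_exp_atBot.comp
  have h1 : Tendsto (fun z : ℝ => z ^ 2 / 2) atTop atTop :=
    (tendsto_pow_atTop two_ne_zero).atTop_div_const (by norm_num)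
  have h2 := tendsto_neg_atTop_atBot.comp h1
  refine h2.congr fun z => ?_
  simp [Function.comp, neg_div]

private lemma E_hasDeriv (z : ℝ) :
    HasDerivAt (fun z : ℝ => Real.exp (-z ^ 2 / 2))
      (Real.exp (-z ^ 2 / 2) * (-(2 * z ^ 1) / 2)) z := by
  have h : HasDerivAt (fun z : ℝ => -z ^ 2 / 2) (-(2 * z ^ 1) / 2) z :=
    (hasDerivAt_pow 2 z).neg.div_const 2
  exact h.exp

theorem stmt_12 (a : ℝ) (ha : 0 < a) :
    a * (a ^ 2 + 3) / (a ^ 2 + 2) ≤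
      (∫ z in Set.Ioi a, z * Real.exp (-z ^ 2 / 2)) /
        (∫ z in Set.Ioi a, Real.exp (-z ^ 2 / 2)) ∧
    (∫ z in Set.Ioi a, z * Real.exp (-z ^ 2 / 2)) /
        (∫ z in Set.Ioi a, Real.exp (-z ^ 2 / 2)) ≤ a + 1 / a := by
  set E : ℝ → ℝ := fun z => Real.exp (-z ^ 2 / 2) with hE_def
  have hEpos : ∀ z, 0 < E z := fun z => Real.exp_pos _
  -- numerator equals exp(-a^2/2)
  have hI1 : (∫ z in Set.Ioi a, z * E z) = E a := by
    have hderiv : ∀ x ∈ Ici a, HasDerivAt (fun z => -E z) (x * E x) x := by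
      intro x _
      have h := (E_hasDeriv x).neg
      refine h.congr_deriv ?_
      simp only [hE_def]; ring
    have := integral_Ioi_of_hasDerivAt_of_tendsto' hderiv
      zE_integrable.integrableOn (by simpa using E_tendsto.neg)
    simpa using this
  -- upper auxiliary function
  set u : ℝ → ℝ := fun z => -(z / (z ^ 2 + 1) * E z) with hu_def
  set u' : ℝ → ℝ := fun z => (1 - 2 / (z ^ 2 + 1) ^ 2) * E z with hu'_def
  have hden : ∀ z : ℝ, (0:ℝ) < z ^ 2 + 1 := fun z => by positivity
  have hu_deriv : ∀ x ∈ Ici a, HasDerivAt u (u' x) x := by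
    intro x _
    have h1 : HasDerivAt (fun z : ℝ => z / (z ^ 2 + 1))
        ((1 * (x ^ 2 + 1) - x * (2 * x ^ 1)) / (x ^ 2 + 1) ^ 2) x :=
      (hasDerivAt_id x).div ((hasDerivAt_pow 2 x).add_const 1) (hden x).ne'
    have h := (h1.mul (E_hasDeriv x)).neg
    refine h.congr_deriv ?_
    have hne := (hden x).ne'
    simp only [hu'_def, hE_def]
    field_simp
    ring
  have hu'_cont : Continuous u' := by
    apply Continuous.mul _ (by fun_prop)
    exact continuous_const.sub (continuous_const.div (by fun_prop)
      fun x => by positivity)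
  have hu'_int : IntegrableOn u' (Ioi a) := by
    refine (E_integrable.mono hu'_cont.aestronglyMeasurable ?_).integrableOn
    refine Filter.Eventually.of_forall fun z => ?_
    simp only [hu'_def, Real.norm_eq_abs, abs_mul, abs_of_pos (hEpos z)]
    have h1 : (0:ℝ) ≤ 2 / (z ^ 2 + 1) ^ 2 := by positivity
    have h2 : 2 / (z ^ 2 + 1) ^ 2 ≤ 2 := by
      rw [div_le_iff₀ (by positivity)]; nlinarith [sq_nonneg z, sq_nonneg (z^2)]
    have : |1 - 2 / (z ^ 2 + 1) ^ 2| ≤ 1 := abs_le.2 ⟨by linarith, by linarith⟩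
    calc |1 - 2 / (z ^ 2 + 1) ^ 2| * E z ≤ 1 * E z :=
          mul_le_mul_of_nonneg_right this (hEpos z).le
      _ = E z := one_mul _
      _ ≤ |rexp (-z ^ 2 / 2)| := le_abs_self _
  have hu_tendsto : Tendsto u atTop (nhds 0) := by
    have hEt : Tendsto E atTop (nhds 0) := E_tendsto
    apply squeeze_zero_norm _ hEt
    intro z
    simp only [hu_def, Real.norm_eq_abs, abs_neg, abs_mul, abs_of_pos (hEpos z), abs_div]
    have h1 : |z| ≤ |z ^ 2 + 1| := by
      rw [abs_of_pos (hden z)]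
      nlinarith [sq_abs z, sq_nonneg (|z| - 1)]
    calc |z| / |z ^ 2 + 1| * E z ≤ 1 * E z := by
          apply mul_le_mul_of_nonneg_right _ (hEpos z).le
          rw [div_le_one (abs_pos.2 (hden z).ne')]
          exact h1
      _ = E z := one_mul _
  have hu_int_eq : (∫ z in Set.Ioi a, u' z) = a / (a ^ 2 + 1) * E a := by
    have := integral_Ioi_of_hasDerivAt_of_tendsto' hu_deriv hu'_int hu_tendsto
    rw [this]
    simp only [hu_def]
    ring
  have hQ_lb : a / (a ^ 2 + 1) * E a ≤ ∫ z in Set.Ioi a, E z := by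
    rw [← hu_int_eq]
    refine setIntegral_mono_on hu'_int E_integrable.integrableOn measurableSet_Ioi
      fun x _ => ?_
    simp only [hu'_def]
    have h1 : (0:ℝ) < 2 / (x ^ 2 + 1) ^ 2 := by positivity
    nlinarith [hEpos x]
  have hQpos : 0 < ∫ z in Set.Ioi a, E z :=
    lt_of_lt_of_le (by positivity) hQ_lb
  -- lower auxiliary function
  set v : ℝ → ℝ := fun z => -((z ^ 2 + 2) / (z * (z ^ 2 + 3)) * E z) with hv_def
  set v' : ℝ → ℝ := fun z =>
    ((z ^ 4 + 3 * z ^ 2 + 6) / (z * (z ^ 2 + 3)) ^ 2 + (z ^ 2 + 2) / (z ^ 2 + 3)) * E z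
    with hv'_def
  have hden3 : ∀ z : ℝ, (0:ℝ) < z ^ 2 + 3 := fun z => by positivity
  have hv_deriv : ∀ x ∈ Ici a, HasDerivAt v (v' x) x := by
    intro x hx
    have hx0 : (0:ℝ) < x := lt_of_lt_of_le ha hx
    have hD : HasDerivAt (fun z : ℝ => z * (z ^ 2 + 3))
        (1 * (x ^ 2 + 3) + x * (2 * x ^ 1)) x :=
      (hasDerivAt_id x).mul ((hasDerivAt_pow 2 x).add_const 3)
    have hDne : x * (x ^ 2 + 3) ≠ 0 := by positivity
    have hN : HasDerivAt (fun z : ℝ => z ^ 2 + 2) (2 * x ^ 1) x :=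
      (hasDerivAt_pow 2 x).add_const 2
    have h1 := hN.div hD hDne
    have h := (h1.mul (E_hasDeriv x)).neg
    refine h.congr_deriv ?_
    simp only [hv'_def, hE_def, Pi.div_apply]
    have hxne : x ≠ 0 := hx0.ne'
    have h3ne : x ^ 2 + 3 ≠ 0 := (hden3 x).ne'
    field_simp
    ring
  have hv'_contOn : ContinuousOn v' (Ioi a) := by
    apply ContinuousOn.mul _ (Continuous.continuousOn (by fun_prop))
    apply ContinuousOn.add
    · exact ContinuousOn.div (Continuous.continuousOn (by fun_prop))
        (Continuous.continuousOn (by fun_prop))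
        (fun x hx => by
          have : (0:ℝ) < x := lt_trans ha hx
          positivity)
    · exact ContinuousOn.div (Continuous.continuousOn (by fun_prop))
        (Continuous.continuousOn (by fun_prop)) (fun x _ => (hden3 x).ne')
  have hv'_int : IntegrableOn v' (Ioi a) := by
    have hbd : Integrable (fun z : ℝ => (1 / a ^ 2 + 1) * E z) := E_integrable.const_mul _
    refine Integrable.mono hbd.integrableOn
      (hv'_contOn.aestronglyMeasurable measurableSet_Ioi) ?_
    filter_upwards [ae_restrict_mem measurableSet_Ioi] with z hz
    have hz0 : (0:ℝ) < z := lt_trans ha hz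
    have hA : (z ^ 4 + 3 * z ^ 2 + 6) / (z * (z ^ 2 + 3)) ^ 2 ≤ 1 / a ^ 2 := by
      have step1 : (z ^ 4 + 3 * z ^ 2 + 6) / (z * (z ^ 2 + 3)) ^ 2 ≤ 1 / z ^ 2 := by
        rw [div_le_div_iff₀ (by positivity) (by positivity)]
        nlinarith [sq_nonneg z, sq_nonneg (z^2)]
      have step2 : 1 / z ^ 2 ≤ 1 / a ^ 2 := by
        apply one_div_le_one_div_of_le (by positivity)
        nlinarith [(show a < z from hz).le]
      linarith
    have hB : (z ^ 2 + 2) / (z ^ 2 + 3) ≤ 1 := by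
      rw [div_le_one (hden3 z)]; linarith
    have hApos : (0:ℝ) ≤ (z ^ 4 + 3 * z ^ 2 + 6) / (z * (z ^ 2 + 3)) ^ 2 := by positivity
    have hBpos : (0:ℝ) ≤ (z ^ 2 + 2) / (z ^ 2 + 3) := by positivity
    simp only [hv'_def, Real.norm_eq_abs]
    rw [abs_mul, abs_of_pos (hEpos z), abs_of_nonneg (by linarith),
      abs_of_nonneg (by positivity : (0:ℝ) ≤ (1 / a ^ 2 + 1) * E z)]
    exact mul_le_mul_of_nonneg_right (by linarith) (hEpos z).le
  have hv_tendsto : Tendsto v atTop (nhds 0) := by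
    have hlim : Tendsto (fun z : ℝ => 1 / a * E z) atTop (nhds 0) := by
      exact (E_tendsto.const_mul (1 / a)).congr' (Filter.Eventually.of_forall fun _ => rfl) |>.mono_right (by simp)
    apply squeeze_zero_norm' _ hlim
    filter_upwards [eventually_ge_atTop a] with z hz
    have hz0 : (0:ℝ) < z := lt_of_lt_of_le ha hz
    simp only [hv_def, Real.norm_eq_abs, abs_neg, abs_mul, abs_of_pos (hEpos z)]
    have hc : |(z ^ 2 + 2) / (z * (z ^ 2 + 3))| ≤ 1 / a := by
      rw [abs_of_nonneg (by positivity), div_le_div_iff₀ (by positivity) ha]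
      nlinarith [hden3 z, hz]
    calc |(z ^ 2 + 2) / (z * (z ^ 2 + 3))| * E z ≤ 1 / a * E z :=
          mul_le_mul_of_nonneg_right hc (hEpos z).le
      _ = 1 / a * E z := rfl
  have hv_int_eq : (∫ z in Set.Ioi a, v' z) = (a ^ 2 + 2) / (a * (a ^ 2 + 3)) * E a := by
    have := integral_Ioi_of_hasDerivAt_of_tendsto' hv_deriv hv'_int hv_tendsto
    rw [this]
    simp only [hv_def]
    ring
  have hQ_ub : (∫ z in Set.Ioi a, E z) ≤ (a ^ 2 + 2) / (a * (a ^ 2 + 3)) * E a := by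
    rw [← hv_int_eq]
    refine setIntegral_mono_on E_integrable.integrableOn hv'_int measurableSet_Ioi
      fun x hx => ?_
    have hx0 : (0:ℝ) < x := lt_trans ha hx
    simp only [hv'_def]
    have hA : 1 / (x ^ 2 + 3) ≤ (x ^ 4 + 3 * x ^ 2 + 6) / (x * (x ^ 2 + 3)) ^ 2 := by
      rw [div_le_div_iff₀ (hden3 x) (by positivity)]
      nlinarith [sq_nonneg x, sq_nonneg (x^2)]
    have hsum : 1 / (x ^ 2 + 3) + (x ^ 2 + 2) / (x ^ 2 + 3) = 1 := by
      rw [← add_div]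
      field_simp
      ring
    have h1 : (1:ℝ) ≤ (x ^ 4 + 3 * x ^ 2 + 6) / (x * (x ^ 2 + 3)) ^ 2
        + (x ^ 2 + 2) / (x ^ 2 + 3) := by linarith
    nlinarith [hEpos x]
  -- assemble
  rw [hI1]
  have ha2 : a ^ 2 + 2 ≠ 0 := by positivity
  have ha3 : a ^ 2 + 3 ≠ 0 := by positivity
  have ha1 : a ^ 2 + 1 ≠ 0 := by positivity
  constructor
  · rw [le_div_iff₀ hQpos]
    have hc : (0:ℝ) ≤ a * (a ^ 2 + 3) / (a ^ 2 + 2) := by positivity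
    calc a * (a ^ 2 + 3) / (a ^ 2 + 2) * (∫ z in Set.Ioi a, E z)
        ≤ a * (a ^ 2 + 3) / (a ^ 2 + 2) * ((a ^ 2 + 2) / (a * (a ^ 2 + 3)) * E a) :=
          mul_le_mul_of_nonneg_left hQ_ub hc
      _ = E a := by field_simp
  · rw [div_le_iff₀ hQpos]
    have hc : (0:ℝ) ≤ a + 1 / a := by positivity
    calc E a = (a + 1 / a) * (a / (a ^ 2 + 1) * E a) := by field_simp
      _ ≤ (a + 1 / a) * (∫ z in Set.Ioi a, E z) :=
          mul_le_mul_of_nonneg_left hQ_lb hc
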